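/- arXiv:1502.05599 — 5 statements merged into one kernel-verified Lean document; each statement's English description precedes it below -/
import Mathlib

section
/- Zero-cost vertex elimination is correct: let v be a vertex of G, let G' be the graph obtained by deleting v, and define thresholds t'(u) = max{t(u) − w(v,u), 0} if (v,u) ∈ E and t'(u) = t(u) otherwise. Then for every S ⊆ V \ {v} and every τ ≥ 1, Influenced[S, τ] computed in G' equals Influenced[S ∪ {v}, τ] ∩ (V \ {v}) computed in G. -/
open scoped Classical

variable {V : Type*} [Fintype V] [DecidableEq V]

/-- The influence diffusion process: `influenced E w t S τ` is the set of vertices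
influenced within round `τ`, starting from target set `S`, in the directed graph with
edge relation `E`, edge weights `w`, and thresholds `t`. -/
noncomputable def influenced (E : V → V → Prop) (w : V → V → ℕ) (t : V → ℕ)
    (S : Finset V) : ℕ → Finset V
  | 0 => S
  | τ + 1 =>
      influenced E w t S τ ∪
        Finset.univ.filter (fun u =>
          t u ≤ ∑ v ∈ (influenced E w t S τ).filter (fun v => E v u), w v u)

lemma subset_influenced (E : V → V → Prop) (w : V → V → ℕ) (t : V → ℕ)
    (S : Finset V) (τ : ℕ) : S ⊆ influenced E w t S τ := by
  induction τ with
  | zero => simp [influenced]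
  | succ n ih =>
      intro x hx
      simp only [influenced, Finset.mem_union]
      exact Or.inl (ih hx)

/-- Zero-cost vertex elimination: deleting a vertex `v` and decreasing the thresholds
of its out-neighbors by `w v ·` yields, for every target set avoiding `v` and every
`τ ≥ 1`, the same influenced set as adding `v` to the target set in the original graph
(restricted to the remaining vertices). -/
theorem zero_cost_elimination (E : V → V → Prop) (w : V → V → ℕ) (t : V → ℕ) (v : V)
    (S' : Finset {u : V // u ≠ v}) (τ : ℕ) (hτ : 1 ≤ τ) :
    (influenced (fun a b : {u : V // u ≠ v} => E a.val b.val)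
        (fun a b => w a.val b.val)
        (fun u => if E v u.val then t u.val - w v u.val else t u.val)
        S' τ).image Subtype.val
      = influenced E w t (insert v (S'.image Subtype.val)) τ \ {v} := by
  clear hτ
  induction τ with
  | zero =>
      simp only [influenced]
      ext x
      simp only [Finset.mem_image, Finset.mem_sdiff, Finset.mem_insert,
        Finset.mem_singleton]
      constructor
      · rintro ⟨⟨a, ha⟩, haS, rfl⟩
        exact ⟨Or.inr ⟨⟨a, ha⟩, haS, rfl⟩, ha⟩
      · rintro ⟨h | h, hne⟩
        · exact absurd h hne
        · exact h
  | succ n ih =>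
      set A := influenced (fun a b : {u : V // u ≠ v} => E a.val b.val)
        (fun a b => w a.val b.val)
        (fun u => if E v u.val then t u.val - w v u.val else t u.val) S' n with hA
      set B := influenced E w t (insert v (S'.image Subtype.val)) n with hB
      have hv : v ∈ B := subset_influenced _ _ _ _ _ (Finset.mem_insert_self _ _)
      -- key sum identity
      have key : ∀ x : V, (∑ b ∈ B.filter (fun b => E b x), w b x)
          = (∑ b ∈ A.filter (fun b => E b.val x), w b.val x)
            + (if E v x then w v x else 0) := by
        intro x
        have h1 : ∑ b ∈ A.filter (fun b => E b.val x), w b.val x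
            = ∑ b ∈ (B \ {v}).filter (fun b => E b x), w b x := by
          rw [← ih, Finset.filter_image,
            Finset.sum_image (fun a _ b _ h => Subtype.ext h)]
        rw [h1]
        by_cases hEv : E v x
        · rw [if_pos hEv]
          have hvmem : v ∈ B.filter (fun b => E b x) :=
            Finset.mem_filter.mpr ⟨hv, hEv⟩
          rw [← Finset.sum_erase_add _ _ hvmem]
          congr 2
          rw [Finset.sdiff_singleton_eq_erase, Finset.filter_erase]
        · rw [if_neg hEv, add_zero]
          congr 1
          rw [Finset.sdiff_singleton_eq_erase, Finset.filter_erase,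
            Finset.erase_eq_of_notMem (by simp [hEv])]
      -- the threshold conditions agree off v
      have cond : ∀ x : V, x ≠ v →
          (((if E v x then t x - w v x else t x)
              ≤ ∑ b ∈ A.filter (fun b => E b.val x), w b.val x)
            ↔ (t x ≤ ∑ b ∈ B.filter (fun b => E b x), w b x)) := by
        intro x _
        rw [key x]
        by_cases hEv : E v x
        · simp only [if_pos hEv]
          omega
        · simp only [if_neg hEv, add_zero]
      simp only [influenced, ← hA, ← hB]
      rw [Finset.image_union, Finset.union_sdiff_distrib, ih]
      congr 1
      ext x
      simp only [Finset.mem_image, Finset.mem_filter, Finset.mem_univ, true_and,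
        Finset.mem_sdiff, Finset.mem_singleton]
      constructor
      · rintro ⟨u, hcond, rfl⟩
        exact ⟨(cond u.val u.2).mp hcond, u.2⟩
      · rintro ⟨hcond, hne⟩
        exact ⟨⟨x, hne⟩, (cond x hne).mpr hcond, rfl⟩
end

section
/- Weighted-clique simulation: given a graph G = (V,E) with |V| = n and thresholds t, form the complete graph K on V with weights w(u,v) = n+1 if {u,v} ∈ E and w(u,v) = 1 otherwise, and thresholds t'(v) = (n+1)·t(v). Then for every S ⊆ V and every τ ≥ 0, Influenced[S, τ] computed in G (with unit edge weights and thresholds t) equals Influenced[S, τ] computed in K (with weights w and thresholds t'). -/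
open scoped Classical

variable {V : Type*} [Fintype V] [DecidableEq V]

lemma key_iff (E : V → V → Prop) (hirr : ∀ u : V, ¬ E u u) (A : Finset V) (u : V) (tu : ℕ) :
    (tu ≤ ∑ v ∈ A.filter (fun v => E v u), (1 : ℕ)) ↔
      ((Fintype.card V + 1) * tu ≤
        ∑ v ∈ A.filter (fun v => v ≠ u), (if E v u then Fintype.card V + 1 else 1)) := by
  set n := Fintype.card V
  have hsub : (A.filter (fun v => v ≠ u)).filter (fun v => E v u)
      = A.filter (fun v => E v u) := by
    ext v
    simp only [Finset.mem_filter, and_assoc]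
    constructor
    · rintro ⟨hv, _, he⟩; exact ⟨hv, he⟩
    · rintro ⟨hv, he⟩
      refine ⟨hv, ?_, he⟩
      intro hvu; exact hirr u (hvu ▸ he)
  set a := (A.filter (fun v => E v u)).card with ha
  set b := ((A.filter (fun v => v ≠ u)).filter (fun v => ¬ E v u)).card with hb
  have hsum : (∑ v ∈ A.filter (fun v => v ≠ u), (if E v u then n + 1 else 1))
      = (n + 1) * a + b := by
    rw [Finset.sum_ite, Finset.sum_const, Finset.sum_const, hsub, smul_eq_mul, smul_eq_mul,
      mul_comm, mul_one]
  have hbn : b ≤ n := le_trans (Finset.card_filter_le _ _)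
    (le_trans (Finset.card_filter_le _ _) (Finset.card_le_univ A))
  rw [Finset.sum_const, smul_eq_mul, mul_one, hsum]
  constructor
  · intro h
    calc (n + 1) * tu ≤ (n + 1) * a := Nat.mul_le_mul_left _ h
      _ ≤ (n + 1) * a + b := Nat.le_add_right _ _
  · intro h
    by_contra hc
    push_neg at hc
    have h1 : a + 1 ≤ tu := hc
    have h2 : (n + 1) * (a + 1) ≤ (n + 1) * a + b :=
      le_trans (Nat.mul_le_mul_left _ h1) h
    rw [Nat.mul_add, Nat.mul_one] at h2
    omega

/-- Weighted-clique simulation: the diffusion process in a graph `G` with unit weights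
and thresholds `t` coincides with the process in the complete graph with weights `n+1`
on edges of `G` and `1` elsewhere, and thresholds `(n+1)·t`. -/
theorem weighted_clique_simulation (E : V → V → Prop) (hirr : ∀ u : V, ¬ E u u)
    (t : V → ℕ) (S : Finset V) (τ : ℕ) :
    influenced E (fun _ _ => 1) t S τ
      = influenced (fun u v : V => u ≠ v)
          (fun u v => if E u v then Fintype.card V + 1 else 1)
          (fun v => (Fintype.card V + 1) * t v) S τ := by
  induction τ with
  | zero => rfl
  | succ τ ih =>
    show _ ∪ _ = _ ∪ _
    rw [← ih]
    congr 1
    apply Finset.filter_congr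
    intro u _
    have h := key_iff E hirr (influenced E (fun _ _ => 1) t S τ) u (t u)
    simp only [Finset.sum_const, smul_eq_mul, mul_one] at h
    convert h using 2
    · simp
    · exact Finset.sum_congr (Finset.filter_congr_decidable _ _ _) (fun _ _ => rfl)
end

section
/- Knapsack reduction correctness: the star tree T (with leaves v_1,...,v_n pointing to center v_{n+1}, edge weights w(v_i, v_{n+1}) = p_i, thresholds t(v_i) = 0 and t(v_{n+1}) = P, costs c(v_i) = w_i and c(v_{n+1}) = W+1) admits a target set S ⊆ V of total cost at most W with Influenced[S,1] = V if and only if there exists a subset of indices I ⊆ {1,...,n} with Σ_{i∈I} w_i ≤ W and Σ_{i∈I} p_i ≥ P. -/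
open scoped Classical

variable {V : Type*} [Fintype V] [DecidableEq V]

/-- Knapsack reduction correctness for the star tree: leaves `v_1,…,v_n` (thresholds 0,
costs `wt i`) point to the center `v_{n+1}` (threshold `P`, cost `W+1`) with arc weights
`p i`. There is a target set of cost at most `W` influencing everything in one round iff
the knapsack instance has a solution. -/
theorem knapsack_reduction (n : ℕ) (p wt : Fin n → ℕ) (W P : ℕ) :
    (∃ S : Finset (Fin (n + 1)),
      (∑ v ∈ S, (if h : (v : ℕ) < n then wt ⟨v, h⟩ else W + 1)) ≤ W ∧
      influenced (fun a b : Fin (n + 1) => (a : ℕ) < n ∧ (b : ℕ) = n)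
        (fun a _ => if h : (a : ℕ) < n then p ⟨a, h⟩ else 0)
        (fun u => if (u : ℕ) = n then P else 0) S 1 = Finset.univ)
    ↔ ∃ I : Finset (Fin n), (∑ i ∈ I, wt i) ≤ W ∧ P ≤ ∑ i ∈ I, p i := by
  constructor
  · rintro ⟨S, hcost, hinf⟩
    have hS : ∀ v ∈ S, (v : ℕ) < n := by
      intro v hv
      by_contra h
      have hv' : (v : ℕ) = n := by have := v.isLt; omega
      have hle : W + 1 ≤ ∑ v ∈ S, (if h : (v : ℕ) < n then wt ⟨v, h⟩ else W + 1) := by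
        have := Finset.single_le_sum
          (f := fun v : Fin (n+1) => if h : (v : ℕ) < n then wt ⟨v, h⟩ else W + 1)
          (fun _ _ => Nat.zero_le _) hv
        simpa [h] using this
      omega
    set I : Finset (Fin n) := Finset.univ.filter (fun i => i.castSucc ∈ S) with hI
    have hmap : S = I.map ⟨Fin.castSucc, Fin.castSucc_injective n⟩ := by
      ext v
      simp only [Finset.mem_map, hI, Finset.mem_filter, Finset.mem_univ, true_and,
        Function.Embedding.coeFn_mk]
      constructor
      · intro hv
        refine ⟨⟨v, hS v hv⟩, ?_, ?_⟩ <;> simp_all [Fin.ext_iff]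
      · rintro ⟨i, hi, rfl⟩; exact hi
    refine ⟨I, ?_, ?_⟩
    · calc ∑ i ∈ I, wt i
          = ∑ v ∈ S, (if h : (v : ℕ) < n then wt ⟨v, h⟩ else W + 1) := by
            rw [hmap, Finset.sum_map]
            refine Finset.sum_congr rfl fun i _ => ?_
            simp [Fin.ext_iff]
        _ ≤ W := hcost
    · have hc : Fin.last n ∈ influenced (fun a b : Fin (n + 1) => (a : ℕ) < n ∧ (b : ℕ) = n)
        (fun a _ => if h : (a : ℕ) < n then p ⟨a, h⟩ else 0)
        (fun u => if (u : ℕ) = n then P else 0) S 1 := hinf ▸ Finset.mem_univ _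
      simp only [influenced, Finset.mem_union, Finset.mem_filter, Finset.mem_univ,
        true_and, Fin.val_last, eq_self_iff_true, and_true] at hc
      rcases hc with hc | hc
      · exact absurd (hS _ hc) (by simp)
      · rw [if_true] at hc
        rw [Finset.filter_true_of_mem hS] at hc
        calc P ≤ ∑ v ∈ S, (if h : (v : ℕ) < n then p ⟨v, h⟩ else 0) := hc
          _ = ∑ i ∈ I, p i := by
            rw [hmap, Finset.sum_map]
            refine Finset.sum_congr rfl fun i _ => ?_
            simp [Fin.ext_iff]
  · rintro ⟨I, hw, hp⟩
    refine ⟨I.map ⟨Fin.castSucc, Fin.castSucc_injective n⟩, ?_, ?_⟩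
    · rw [Finset.sum_map]
      calc ∑ i ∈ I, (if h : ((Fin.castSucc i : Fin (n+1)) : ℕ) < n then wt ⟨_, h⟩ else W + 1)
          = ∑ i ∈ I, wt i := by
            refine Finset.sum_congr rfl fun i _ => ?_
            simp [Fin.ext_iff]
        _ ≤ W := hw
    · apply Finset.eq_univ_of_forall
      intro u
      simp only [influenced, Finset.mem_union, Finset.mem_filter, Finset.mem_univ, true_and]
      right
      by_cases hu : (u : ℕ) = n
      · rw [if_pos hu]
        rw [Finset.sum_filter, Finset.sum_map]
        calc P ≤ ∑ i ∈ I, p i := hp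
          _ = _ := by
            refine Finset.sum_congr rfl fun i _ => ?_
            rw [if_pos ⟨by simp, hu⟩]
            simp [Fin.ext_iff]
      · rw [if_neg hu]; exact Nat.zero_le _
end

section
/- Early activation of a tree vertex's parent can be simulated by threshold reduction: let v be a non-root vertex of a rooted tree with parent p(v), and let t'(v) = max{t(v) − w(p(v), v), 0}. If S ⊆ V(T(v)) contains v's parent's influence from round 1 onward (i.e., we run the process in T(v) with v's threshold replaced by t'(v) starting from round 1), this is equivalent to running the process in T(v) ∪ {p(v)} with target set S ∪ {p(v)} restricted to T(v). Formally: for every S ⊆ V(T(v)) and τ ≥ 1, Influenced[S ∪ {p(v)}, τ] ∩ V(T(v)) computed in the tree induced on V(T(v)) ∪ {p(v)} equals Influenced'[S, τ] computed in T(v) with threshold t'(v) at v and original thresholds elsewhere. -/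
open scoped Classical

variable {V : Type*} [Fintype V] [DecidableEq V]

/-- `inSubtree G p v x` means `x` lies in the connected component of `v` after deleting
the parent `p` of `v` from the tree `G`, i.e. in the subtree `T(v)`. -/
def inSubtree (G : SimpleGraph V) (p v x : V) : Prop :=
  Relation.ReflTransGen (fun a b => G.Adj a b ∧ a ≠ p ∧ b ≠ p) v x

section Aux

set_option linter.unusedSectionVars false

lemma inSubtree_ne_parent {G : SimpleGraph V} {p v x : V} (hpv : p ≠ v)
    (h : inSubtree G p v x) : x ≠ p := by
  induction h with
  | refl => exact Ne.symm hpv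
  | tail _ h _ => exact h.2.2

lemma inSubtree_walk {G : SimpleGraph V} {p v x : V} (hpv : p ≠ v)
    (hx : inSubtree G p v x) : ∃ W : G.Walk v x, ∀ y ∈ W.support, y ≠ p := by
  induction hx with
  | refl => exact ⟨.nil, by simp [Ne.symm hpv]⟩
  | tail _ hstep ih =>
      obtain ⟨W, hW⟩ := ih
      refine ⟨W.concat hstep.1, ?_⟩
      intro y hy
      rw [SimpleGraph.Walk.support_concat, List.mem_append,
        List.mem_singleton] at hy
      rcases hy with hy | rfl
      · exact hW y hy
      · exact hstep.2.2

/-- In a tree, the only neighbor of `p` lying in the subtree `T(v)` is `v` itself. -/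
lemma inSubtree_adj_parent {G : SimpleGraph V} (hT : G.IsTree) {p v x : V}
    (hadj : G.Adj p v) (hx : inSubtree G p v x) (hpx : G.Adj p x) : x = v := by
  obtain ⟨W, hW⟩ := inSubtree_walk hadj.ne hx
  have hP := W.bypass_isPath
  have hsup : p ∉ W.bypass.support := fun h => hW p (W.support_bypass_subset h) rfl
  have huniq := SimpleGraph.isAcyclic_iff_path_unique.mp hT.IsAcyclic
  have heq := huniq (SimpleGraph.Path.singleton hpx) ⟨.cons hadj W.bypass, hP.cons hsup⟩
  have hval := congrArg (fun P : G.Path p x => P.1.getVert 1) heq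
  simpa [SimpleGraph.Path.singleton, SimpleGraph.Walk.getVert] using hval

lemma mem_influenced_of_mem (E : V → V → Prop) (w : V → V → ℕ) (t : V → ℕ)
    {S : Finset V} {x : V} (hx : x ∈ S) : ∀ τ, x ∈ influenced E w t S τ
  | 0 => hx
  | τ + 1 => Finset.mem_union_left _ (mem_influenced_of_mem E w t hx τ)

/-- The main simulation lemma, for every round `τ` (including `τ = 0`), stated for
abstract edge relations `E₁`, `E₂` and reduced threshold `t'`. -/
lemma parent_simulation_aux (G : SimpleGraph V) (hT : G.IsTree)
    (w : V → V → ℕ) (t : V → ℕ) (p v : V) (hadj : G.Adj p v)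
    (S : Finset V) (hS : ∀ x ∈ S, inSubtree G p v x)
    (E₁ E₂ : V → V → Prop) (t' : V → ℕ)
    (hE₁ : ∀ a b, E₁ a b ↔
      (G.Adj a b ∧ (inSubtree G p v a ∨ a = p) ∧ (inSubtree G p v b ∨ b = p)))
    (hE₂ : ∀ a b, E₂ a b ↔ (G.Adj a b ∧ inSubtree G p v a ∧ inSubtree G p v b))
    (ht' : ∀ x, t' x = if x = v then t v - w p v else t x) (τ : ℕ) :
    influenced E₁ w t (insert p S) τ ∩ Finset.univ.filter (inSubtree G p v)
      = influenced E₂ w t' S τ ∩ Finset.univ.filter (inSubtree G p v) := by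
  have hpns : ¬ inSubtree G p v p := fun h => inSubtree_ne_parent hadj.ne h rfl
  induction τ with
  | zero =>
      ext x
      simp only [influenced, Finset.mem_inter, Finset.mem_filter, Finset.mem_univ, true_and,
        Finset.mem_insert]
      constructor
      · rintro ⟨rfl | hx, hin⟩
        · exact absurd hin hpns
        · exact ⟨hx, hin⟩
      · rintro ⟨hx, hin⟩
        exact ⟨Or.inr hx, hin⟩
  | succ τ ih =>
      have hAB : ∀ y, inSubtree G p v y →
          (y ∈ influenced E₁ w t (insert p S) τ ↔ y ∈ influenced E₂ w t' S τ) := by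
        intro y hy
        have := Finset.ext_iff.mp ih y
        simpa [Finset.mem_inter, Finset.mem_filter, hy] using this
      -- the two key filter identities
      have hfilv : (influenced E₁ w t (insert p S) τ).filter (fun y => E₁ y v)
          = insert p ((influenced E₂ w t' S τ).filter (fun y => E₂ y v)) := by
        ext y
        simp only [Finset.mem_filter, Finset.mem_insert, hE₁, hE₂]
        constructor
        · rintro ⟨hyA, hadjyv, (hy | rfl), -⟩
          · exact Or.inr ⟨(hAB y hy).mp hyA, hadjyv, hy, Relation.ReflTransGen.refl⟩
          · exact Or.inl rfl
        · rintro (rfl | ⟨hyB, hadjyv, hy, -⟩)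
          · exact ⟨mem_influenced_of_mem _ _ _ (Finset.mem_insert_self _ S) τ,
              hadj, Or.inr rfl, Or.inl Relation.ReflTransGen.refl⟩
          · exact ⟨(hAB y hy).mpr hyB, hadjyv, Or.inl hy,
              Or.inl Relation.ReflTransGen.refl⟩
      have hfilu : ∀ u, inSubtree G p v u → u ≠ v →
          (influenced E₁ w t (insert p S) τ).filter (fun y => E₁ y u)
            = (influenced E₂ w t' S τ).filter (fun y => E₂ y u) := by
        intro u hu huv
        have hpu : ¬ G.Adj p u := fun h => huv (inSubtree_adj_parent hT hadj hu h)
        ext y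
        simp only [Finset.mem_filter, hE₁, hE₂]
        constructor
        · rintro ⟨hyA, hadjyu, (hy | rfl), -⟩
          · exact ⟨(hAB y hy).mp hyA, hadjyu, hy, hu⟩
          · exact absurd hadjyu hpu
        · rintro ⟨hyB, hadjyu, hy, -⟩
          exact ⟨(hAB y hy).mpr hyB, hadjyu, Or.inl hy, Or.inl hu⟩
      have hpnot : p ∉ (influenced E₂ w t' S τ).filter (fun y => E₂ y v) := by
        simp only [Finset.mem_filter, not_and]
        exact fun _ h => absurd ((hE₂ p v).mp h).2.1 hpns
      ext u
      simp only [influenced, Finset.mem_inter, Finset.mem_union, Finset.mem_filter,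
        Finset.mem_univ, true_and]
      constructor
      · rintro ⟨hmem | hthr, hu⟩
        · exact ⟨Or.inl ((hAB u hu).mp hmem), hu⟩
        · refine ⟨Or.inr ?_, hu⟩
          by_cases huv : u = v
          · subst huv
            rw [hfilv, Finset.sum_insert hpnot] at hthr
            rw [ht' u, if_pos rfl]
            exact tsub_le_iff_left.mpr hthr
          · rw [hfilu u hu huv] at hthr
            rw [ht' u, if_neg huv]
            exact hthr
      · rintro ⟨hmem | hthr, hu⟩
        · exact ⟨Or.inl ((hAB u hu).mpr hmem), hu⟩
        · refine ⟨Or.inr ?_, hu⟩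
          by_cases huv : u = v
          · subst huv
            rw [ht' u, if_pos rfl] at hthr
            rw [hfilv, Finset.sum_insert hpnot]
            exact tsub_le_iff_left.mp hthr
          · rw [ht' u, if_neg huv] at hthr
            rw [hfilu u hu huv]
            exact hthr

end Aux

/-- Early activation of a vertex's parent can be simulated by threshold reduction:
running the process in the tree induced on `T(v) ∪ {p(v)}` with `p(v)` in the target set
yields, on `T(v)` and for every `τ ≥ 1`, the same influenced sets as running the process
in `T(v)` alone with the threshold of `v` reduced to `t(v) - w(p(v), v)` (truncated). -/
theorem parent_simulation (G : SimpleGraph V) (hT : G.IsTree)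
    (w : V → V → ℕ) (t : V → ℕ) (p v : V) (hadj : G.Adj p v)
    (S : Finset V) (hS : ∀ x ∈ S, inSubtree G p v x) (τ : ℕ) (hτ : 1 ≤ τ) :
    influenced
        (fun a b => G.Adj a b ∧ (inSubtree G p v a ∨ a = p) ∧ (inSubtree G p v b ∨ b = p))
        w t (insert p S) τ ∩ Finset.univ.filter (inSubtree G p v)
      = influenced (fun a b => G.Adj a b ∧ inSubtree G p v a ∧ inSubtree G p v b)
          w (fun x => if x = v then t v - w p v else t x) S τ
        ∩ Finset.univ.filter (inSubtree G p v) :=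
  parent_simulation_aux G hT w t p v hadj S hS _ _ _
    (fun _ _ => Iff.rfl) (fun _ _ => Iff.rfl) (fun _ => rfl) τ
end

section
/- Cycle-to-path reduction correctness: let C_n be a weighted cycle, fix a vertex v_i, and form the path P = C_n − v_i with thresholds of the two neighbors v_{i−1}, v_{i+1} reduced to t'(v_j) = max{t(v_j) − w(v_i, v_j), 0} and all other thresholds unchanged. Then for every S ⊆ V(C_n) \ {v_i} and every τ ≥ 1, Influenced[S ∪ {v_i}, τ] ∩ (V(C_n) \ {v_i}) computed in C_n equals Influenced'[S, τ] computed in P with the reduced thresholds. -/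
open scoped Classical

variable {V : Type*} [Fintype V] [DecidableEq V]

/-- Cycle-to-path reduction correctness: deleting a vertex `v_i` of the cycle `C_n` and
reducing the thresholds of its two neighbors by the weights of the arcs from `v_i`
yields, for target sets containing `v_i` and every `τ ≥ 1`, the same influenced sets on
the remaining vertices. -/
theorem cycle_to_path (n : ℕ) [NeZero n] (hn : 3 ≤ n)
    (w : Fin n → Fin n → ℕ) (t : Fin n → ℕ) (i : Fin n)
    (S : Finset (Fin n)) (hiS : i ∉ S) (τ : ℕ) (hτ : 1 ≤ τ) :
    (influenced (fun j k : Fin n => k = j + 1 ∨ j = k + 1) w t (insert i S) τ).erase i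
      = (influenced (fun j k : Fin n => (k = j + 1 ∨ j = k + 1) ∧ j ≠ i ∧ k ≠ i) w
          (fun j => if (j = i + 1 ∨ i = j + 1) then t j - w i j else t j) S τ).erase i := by
  clear hn hτ
  suffices h : ∀ τ : ℕ,
      i ∈ influenced (fun j k : Fin n => k = j + 1 ∨ j = k + 1) w t (insert i S) τ ∧
      (influenced (fun j k : Fin n => k = j + 1 ∨ j = k + 1) w t (insert i S) τ).erase i
        = (influenced (fun j k : Fin n => (k = j + 1 ∨ j = k + 1) ∧ j ≠ i ∧ k ≠ i) w
            (fun j => if (j = i + 1 ∨ i = j + 1) then t j - w i j else t j) S τ).erase i by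
    exact (h τ).2
  intro τ
  induction τ with
  | zero =>
      refine ⟨Finset.mem_insert_self _ _, ?_⟩
      simp only [influenced]
      rw [Finset.erase_insert hiS, Finset.erase_eq_of_notMem hiS]
  | succ τ ih =>
      obtain ⟨hiA, hAB⟩ := ih
      refine ⟨by rw [influenced]; exact Finset.mem_union_left _ hiA, ?_⟩
      rw [influenced, influenced, Finset.erase_union_distrib, Finset.erase_union_distrib, hAB]
      congr 1
      ext u
      simp only [Finset.mem_erase, Finset.mem_filter, Finset.mem_univ, true_and]
      refine and_congr_right fun hu => ?_
      set A := influenced (fun j k : Fin n => k = j + 1 ∨ j = k + 1) w t (insert i S) τ with hA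
      set B := influenced (fun j k : Fin n => (k = j + 1 ∨ j = k + 1) ∧ j ≠ i ∧ k ≠ i) w
          (fun j => if (j = i + 1 ∨ i = j + 1) then t j - w i j else t j) S τ with hB
      have hmem : ∀ v : Fin n, v ≠ i → (v ∈ A ↔ v ∈ B) := by
        intro v hv
        have := Finset.ext_iff.mp hAB v
        simpa [Finset.mem_erase, hv] using this
      have hfilt : (@Finset.filter (Fin n) (fun v => (u = v + 1 ∨ v = u + 1) ∧ v ≠ i)
            (fun _ => Classical.propDecidable _) A)
          = (@Finset.filter (Fin n) (fun v => (u = v + 1 ∨ v = u + 1) ∧ v ≠ i ∧ u ≠ i)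
            (fun _ => Classical.propDecidable _) B) := by
        ext v
        simp only [Finset.mem_filter]
        constructor
        · rintro ⟨hvA, hE, hvi⟩; exact ⟨(hmem v hvi).1 hvA, hE, hvi, hu⟩
        · rintro ⟨hvB, hE, hvi, -⟩; exact ⟨(hmem v hvi).2 hvB, hE, hvi⟩
      by_cases hEi : u = i + 1 ∨ i = u + 1
      · have hAfilt : (@Finset.filter (Fin n) (fun v => u = v + 1 ∨ v = u + 1)
              (fun _ => Classical.propDecidable _) A)
            = insert i (@Finset.filter (Fin n) (fun v => (u = v + 1 ∨ v = u + 1) ∧ v ≠ i)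
              (fun _ => Classical.propDecidable _) A) := by
          ext v
          simp only [Finset.mem_insert, Finset.mem_filter]
          constructor
          · rintro ⟨hvA, hE⟩
            by_cases hvi : v = i
            · exact Or.inl hvi
            · exact Or.inr ⟨hvA, hE, hvi⟩
          · rintro (rfl | ⟨hvA, hE, -⟩)
            · exact ⟨hiA, hEi⟩
            · exact ⟨hvA, hE⟩
        rw [hAfilt, Finset.sum_insert (by simp), hfilt, if_pos hEi,
          ← Nat.sub_le_iff_le_add' ]
      · have hAfilt : (@Finset.filter (Fin n) (fun v => u = v + 1 ∨ v = u + 1)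
              (fun _ => Classical.propDecidable _) A)
            = (@Finset.filter (Fin n) (fun v => (u = v + 1 ∨ v = u + 1) ∧ v ≠ i)
              (fun _ => Classical.propDecidable _) A) := by
          ext v
          simp only [Finset.mem_filter]
          constructor
          · rintro ⟨hvA, hE⟩
            refine ⟨hvA, hE, ?_⟩
            rintro rfl
            exact hEi hE
          · rintro ⟨hvA, hE, -⟩
            exact ⟨hvA, hE⟩
        rw [hAfilt, hfilt, if_neg hEi]
end
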